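/- Gupta's midpoint configuration: in a real inner product space, let a, b, c be non-collinear with dist a c = dist b c (isosceles triangle with apex c). Let d satisfy Sbtw ℝ c b d and e satisfy Sbtw ℝ c a e with dist b d = dist a e (both legs extended by congruent segments). Then the segments a d and e b intersect: there exists f with Sbtw ℝ a f d and Sbtw ℝ e f b, and moreover dist a f = dist b f (f lies on the perpendicular bisector of ab). -/

import Mathlib

open RealInnerProductSpace

private lemma indep_of_not_collinear {V : Type*} [NormedAddCommGroup V]
    [InnerProductSpace ℝ V] {a b c : V}
    (hnc : ¬ Collinear ℝ ({a, b, c} : Set V)) {α β : ℝ}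
    (h : α • (a - c) + β • (b - c) = 0) : α = 0 ∧ β = 0 := by
  have hc : c ∈ ({a, b, c} : Set V) := by simp
  by_cases hα : α = 0
  · refine ⟨hα, ?_⟩
    by_contra hβ
    subst hα
    have hbc : b = c := by
      have h0 : β • (b - c) = 0 := by simpa using h
      exact sub_eq_zero.mp ((smul_eq_zero.mp h0).resolve_left hβ)
    exact hnc (by
      rw [collinear_iff_of_mem hc]
      refine ⟨a - c, fun p hp => ?_⟩
      rcases hp with hp | hp | hp <;> rw [hp]
      · exact ⟨1, by rw [vadd_eq_add]; module⟩
      · exact ⟨0, by rw [vadd_eq_add, zero_smul, zero_add, hbc]⟩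
      · exact ⟨0, by rw [vadd_eq_add, zero_smul, zero_add]⟩)
  · exfalso
    apply hnc
    rw [collinear_iff_of_mem hc]
    refine ⟨b - c, fun p hp => ?_⟩
    rcases hp with hp | hp | hp <;> rw [hp]
    · refine ⟨-(β / α), ?_⟩
      have hac : a - c = (-(β / α)) • (b - c) := by
        calc a - c = α⁻¹ • (α • (a - c)) := (inv_smul_smul₀ hα _).symm
          _ = α⁻¹ • ((-β) • (b - c)) := by
              congr 1
              have h' : α • (a - c) = -(β • (b - c)) := by
                rw [eq_neg_iff_add_eq_zero]; exact h
              rw [h', neg_smul]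
          _ = (-(β / α)) • (b - c) := by rw [smul_smul]; congr 1; field_simp
      rw [vadd_eq_add, ← hac]; abel
    · exact ⟨1, by rw [vadd_eq_add]; module⟩
    · exact ⟨0, by rw [vadd_eq_add, zero_smul, zero_add]⟩

/-- From strict betweenness, express the far point as a dilation. -/
private lemma sbtw_ratio {V : Type*} [NormedAddCommGroup V] [InnerProductSpace ℝ V]
    {c b d : V} (hd : Sbtw ℝ c b d) :
    d = c + ((dist c b + dist b d) / dist c b) • (b - c) := by
  obtain ⟨p, q, hp, hq, hpq, hb⟩ := mem_segment_iff_wbtw.mpr hd.wbtw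
  have hbc : b ≠ c := hd.ne_left
  have hq0 : q ≠ 0 := by
    rintro rfl
    exact hbc (by rw [← hb]; simp at hpq ⊢; simp [hpq])
  have hbcv : b - c = q • (d - c) := by
    have hp' : p = 1 - q := by linarith
    rw [← hb, hp']
    module
  have hr : dist c b = q * dist c d := by
    rw [dist_comm c b, dist_eq_norm, dist_eq_norm, hbcv, norm_smul,
      Real.norm_eq_abs, abs_of_nonneg hq, norm_sub_rev]
  have hsum : dist c b + dist b d = dist c d := dist_add_dist_eq_iff.mpr hd.wbtw
  have hrpos : 0 < dist c b := dist_pos.mpr (fun h => hbc h.symm)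
  have hqinv : (dist c b + dist b d) / dist c b = q⁻¹ := by
    rw [hsum, div_eq_iff (ne_of_gt hrpos)]
    rw [hr, inv_mul_cancel_left₀ hq0]
  rw [hqinv]
  have hdc : d - c = q⁻¹ • (b - c) := by
    rw [hbcv, smul_smul, inv_mul_cancel₀ hq0, one_smul]
  rw [← hdc]; abel

theorem gupta_configuration {V : Type*} [NormedAddCommGroup V] [InnerProductSpace ℝ V]
    {a b c d e : V} (hnc : ¬ Collinear ℝ ({a, b, c} : Set V))
    (hiso : dist a c = dist b c)
    (hd : Sbtw ℝ c b d) (he : Sbtw ℝ c a e) (hext : dist b d = dist a e) :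
    ∃ f : V, Sbtw ℝ a f d ∧ Sbtw ℝ e f b ∧ dist a f = dist b f := by
  set r : ℝ := dist c b with hr
  set m : ℝ := dist b d with hm
  have hrpos : 0 < r := dist_pos.mpr (fun h => hd.ne_left h.symm)
  have hmpos : 0 < m := dist_pos.mpr hd.ne_right
  set L : ℝ := (r + m) / r with hL
  have hL1 : 1 < L := by rw [hL, lt_div_iff₀ hrpos]; linarith
  have hL0 : 0 < L := by linarith
  have hdeq : d = c + L • (b - c) := sbtw_ratio hd
  have heeq : e = c + L • (a - c) := by
    have h1 : dist c a = r := by rw [hr, dist_comm c a, dist_comm c b]; exact hiso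
    have h2 := sbtw_ratio he
    rw [h1, ← hext] at h2
    exact h2
  set μ : ℝ := L / (L + 1) with hμ
  have hLp1 : (0:ℝ) < L + 1 := by linarith
  have hμ0 : 0 < μ := by positivity
  have hμ1 : μ < 1 := by rw [hμ, div_lt_one hLp1]; linarith
  have hμL : (1 - μ) * L = μ := by rw [hμ]; field_simp; ring
  clear_value r m L μ
  have hfc : μ • a + (1 - μ) • d = c + μ • ((a - c) + (b - c)) := by
    rw [hdeq]
    linear_combination (norm := module) hμL • (b - c)
  have hfe' : (1 - μ) • e + μ • b = c + μ • ((a - c) + (b - c)) := by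
    rw [heeq]
    linear_combination (norm := module) hμL • (a - c)
  refine ⟨μ • a + (1 - μ) • d, ⟨?_, ?_, ?_⟩, ⟨?_, ?_, ?_⟩, ?_⟩
  · exact mem_segment_iff_wbtw.mp ⟨μ, 1 - μ, hμ0.le, by linarith, by ring, rfl⟩
  · intro hfa
    have h0 : (1 - μ) • (a - c) + (-μ) • (b - c) = 0 := by
      linear_combination (norm := module) hfc - hfa
    have := (indep_of_not_collinear hnc h0).1
    linarith
  · intro hfd
    have hd' : c + L • (b - c) = c + μ • ((a - c) + (b - c)) := by
      rw [← hdeq, ← hfd, hfc]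
    have h0 : (-μ) • (a - c) + (L - μ) • (b - c) = 0 := by
      linear_combination (norm := module) hd'
    have := (indep_of_not_collinear hnc h0).1
    linarith
  · exact mem_segment_iff_wbtw.mp ⟨1 - μ, μ, by linarith, hμ0.le, by ring,
      hfe'.trans hfc.symm⟩
  · intro hfe
    have he' : c + L • (a - c) = c + μ • ((a - c) + (b - c)) := by
      rw [← heeq, ← hfe, hfc]
    have h0 : (L - μ) • (a - c) + (-μ) • (b - c) = 0 := by
      linear_combination (norm := module) he'
    have := (indep_of_not_collinear hnc h0).2
    linarith
  · intro hfb
    have hb' : b = c + μ • ((a - c) + (b - c)) := by rw [← hfc]; exact hfb.symm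
    have h0 : (-μ) • (a - c) + (1 - μ) • (b - c) = 0 := by
      linear_combination (norm := module) hb'
    have := (indep_of_not_collinear hnc h0).2
    linarith
  · have huv : ‖a - c‖ = ‖b - c‖ := by
      rw [← dist_eq_norm, ← dist_eq_norm]; exact hiso
    have h1 : a - (μ • a + (1 - μ) • d) = (1 - μ) • (a - c) - μ • (b - c) := by
      rw [hfc]; module
    have h2 : b - (μ • a + (1 - μ) • d) = (1 - μ) • (b - c) - μ • (a - c) := by
      rw [hfc]; module
    rw [dist_eq_norm, dist_eq_norm, h1, h2]
    have hsq : ‖(1 - μ) • (a - c) - μ • (b - c)‖ ^ 2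
        = ‖(1 - μ) • (b - c) - μ • (a - c)‖ ^ 2 := by
      rw [norm_sub_sq_real, norm_sub_sq_real, norm_smul, norm_smul, norm_smul, norm_smul,
        real_inner_smul_left, real_inner_smul_left, real_inner_smul_right, real_inner_smul_right,
        real_inner_comm (b - c) (a - c), huv]
    have hn1 := norm_nonneg ((1 - μ) • (a - c) - μ • (b - c))
    have hn2 := norm_nonneg ((1 - μ) • (b - c) - μ • (a - c))
    nlinarith [hsq, hn1, hn2]
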